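/- Let k be a field of characteristic p > 2 and S = k⟨x,y⟩/(yx − xy − (1/2)x²). With α = −y^{p−2} + ∑_{i=1}^{p−2} (−1)^{i+1}((i+1)!/2^{i+1}) x^i y^{p−2−i}, one has α·(y − (1/2)x) = −(x+y)^{p−1} in S. -/

import Mathlib

open Finset

noncomputable def auxC (k : Type*) [Field k] : ℕ → k := fun i =>
  if i = 0 then -1 else ((-1:k)^(i+1) * ((i+1).factorial : k)) / 2^(i+1)

section
variable {k : Type*} [Field k] {S : Type*} [Ring S] [Algebra k S] (x y : S)

theorem aux_L0 (hrel : y * x = x * y + (2 : k)⁻¹ • x ^ 2) :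
    ∀ m : ℕ, y * x ^ m = x ^ m * y + ((m : k) * 2⁻¹) • x ^ (m + 1) := by
  intro m
  induction m with
  | zero => simp
  | succ m ih =>
    have h1 : y * x ^ (m+1) = (y * x ^ m) * x := by rw [mul_assoc, ← pow_succ]
    rw [h1, ih, add_mul, smul_mul_assoc, ← pow_succ, mul_assoc, hrel, mul_add, mul_smul_comm,
      ← mul_assoc, ← pow_succ, ← pow_add]
    have h2 : x ^ (m + 2) = x ^ (m + 1 + 1) := by ring_nf
    push_cast
    rw [h2]
    module

theorem aux_L1 (h2k : (2:k) ≠ 0) (hrel : y * x = x * y + (2 : k)⁻¹ • x ^ 2) (j : ℕ) :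
    y ^ j * x = ∑ m ∈ range (j + 1),
      ((j.descFactorial m : k) / 2 ^ m) • (x ^ (m + 1) * y ^ (j - m)) := by
  induction j with
  | zero => simp
  | succ j ih =>
    have h1 : y ^ (j+1) * x = y * (y ^ j * x) := by rw [← mul_assoc, ← pow_succ']
    have h2 : ∀ m ∈ range (j + 1),
        y * (((j.descFactorial m : k) / 2 ^ m) • (x ^ (m + 1) * y ^ (j - m)))
        = ((j.descFactorial m : k) / 2 ^ m) • (x ^ (m + 1) * y ^ (j + 1 - m))
          + ((j.descFactorial m : k) / 2 ^ m * ((((m+1 : ℕ)):k) * 2⁻¹)) •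
              (x ^ (m + 1 + 1) * y ^ (j - m)) := by
      intro m hm
      rw [mem_range] at hm
      have e1 : y * (x ^ (m+1) * y ^ (j-m))
          = x ^ (m+1) * y ^ (j+1-m) + (((m+1 : ℕ):k) * 2⁻¹) • (x ^ (m+1+1) * y ^ (j-m)) := by
        rw [← mul_assoc, aux_L0 x y hrel (m+1), add_mul, smul_mul_assoc, mul_assoc, ← pow_succ',
          show j - m + 1 = j + 1 - m by omega]
      rw [mul_smul_comm, e1]
      module
    rw [h1, ih, Finset.mul_sum, Finset.sum_congr rfl h2, Finset.sum_add_distrib]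
    have h3 : ∑ m ∈ range (j + 1), ((j.descFactorial m : k) / 2 ^ m) • (x ^ (m + 1) * y ^ (j + 1 - m))
        = ∑ m ∈ range (j + 2), ((j.descFactorial m : k) / 2 ^ m) • (x ^ (m + 1) * y ^ (j + 1 - m)) := by
      rw [Finset.sum_range_succ (n := j+1), Nat.descFactorial_eq_zero_iff_lt.2 (by omega)]
      simp
    rw [h3]
    rw [Finset.sum_range_succ' (fun m => ((j.descFactorial m : k) / 2 ^ m) • (x ^ (m + 1) * y ^ (j + 1 - m))) (j+1)]
    rw [show j + 1 + 1 = (j + 1) + 1 from rfl]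
    rw [Finset.sum_range_succ' (fun m => (((j+1).descFactorial m : k) / 2 ^ m) • (x ^ (m + 1) * y ^ (j + 1 - m))) (j+1)]
    rw [add_right_comm]
    congr 1
    rw [← Finset.sum_add_distrib]
    apply Finset.sum_congr rfl
    intro m hm
    rw [mem_range] at hm
    rw [show j + 1 - (m + 1) = j - m by omega, ← add_smul]
    congr 1
    have hd : ((j+1).descFactorial (m+1) : ℕ) = (j+1) * j.descFactorial m :=
      Nat.succ_descFactorial_succ j m
    rcases le_or_gt (m+1) j with h | h
    · have hd2 : (j.descFactorial (m+1) : ℕ) = (j - m) * j.descFactorial m :=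
        Nat.descFactorial_succ j m
      have hc : ((j - m : ℕ) : k) = (j : k) - m := by
        have : m ≤ j := by omega
        push_cast [this]; ring
      rw [hd, hd2]
      push_cast
      rw [hc]
      have h2 : (2:k) ≠ 0 := h2k
      field_simp
      ring
    · rcases Nat.lt_or_ge j m with h' | h'
      · rw [hd, Nat.descFactorial_eq_zero_iff_lt.2 (by omega : j < m + 1),
          Nat.descFactorial_eq_zero_iff_lt.2 h']
        push_cast
        ring
      · have hm' : m = j := by omega
        subst hm'
        rw [hd, Nat.descFactorial_eq_zero_iff_lt.2 (by omega : m < m + 1),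
          Nat.descFactorial_self]
        push_cast
        have h2 : (2:k) ≠ 0 := h2k
        field_simp
        ring

theorem aux_L2 (h2k : (2:k) ≠ 0) (hrel : y * x = x * y + (2 : k)⁻¹ • x ^ 2) (n : ℕ) :
    (x + y) ^ n = ∑ i ∈ range (n + 1),
      ((n.choose i : k) * ((i+1).factorial : k) / 2 ^ i) • (x ^ i * y ^ (n - i)) := by
  induction n with
  | zero => simp
  | succ n ih =>
    have h1 : (x + y) ^ (n+1) = (x + y) * (x + y) ^ n := by rw [← pow_succ']
    have h2 : ∀ i ∈ range (n + 1),
        (x + y) * (((n.choose i : k) * ((i+1).factorial : k) / 2 ^ i) • (x ^ i * y ^ (n - i)))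
        = ((n.choose i : k) * ((i+1).factorial : k) / 2 ^ i) • (x ^ i * y ^ (n + 1 - i))
          + ((n.choose i : k) * ((i+1).factorial : k) / 2 ^ i * ((i:k) * 2⁻¹ + 1)) •
              (x ^ (i+1) * y ^ (n - i)) := by
      intro i hi
      rw [mem_range] at hi
      have e1 : (x + y) * (x ^ i * y ^ (n-i))
          = x ^ (i+1) * y ^ (n-i) + (x ^ i * y ^ (n+1-i) + ((i:k) * 2⁻¹) • (x ^ (i+1) * y ^ (n-i))) := by
        rw [add_mul, ← mul_assoc, ← mul_assoc, aux_L0 x y hrel i, add_mul, smul_mul_assoc,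
          ← pow_succ', mul_assoc, ← pow_succ',
          show n - i + 1 = n + 1 - i by omega]
      rw [mul_smul_comm, e1]
      module
    rw [h1, ih, Finset.mul_sum, Finset.sum_congr rfl h2, Finset.sum_add_distrib]
    have h3 : ∑ i ∈ range (n + 1), ((n.choose i : k) * ((i+1).factorial : k) / 2 ^ i) • (x ^ i * y ^ (n + 1 - i))
        = ∑ i ∈ range (n + 2), ((n.choose i : k) * ((i+1).factorial : k) / 2 ^ i) • (x ^ i * y ^ (n + 1 - i)) := by
      rw [Finset.sum_range_succ (n := n+1), Nat.choose_eq_zero_of_lt (by omega)]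
      simp
    rw [h3]
    rw [Finset.sum_range_succ' (fun i => ((n.choose i : k) * ((i+1).factorial : k) / 2 ^ i) • (x ^ i * y ^ (n + 1 - i))) (n+1)]
    rw [show n + 1 + 1 = (n + 1) + 1 from rfl]
    rw [Finset.sum_range_succ' (fun i => (((n+1).choose i : k) * ((i+1).factorial : k) / 2 ^ i) • (x ^ i * y ^ (n + 1 - i))) (n+1)]
    rw [add_right_comm]
    congr 1
    · rw [← Finset.sum_add_distrib]
      apply Finset.sum_congr rfl
      intro i hi
      rw [mem_range] at hi
      rw [show n + 1 - (i + 1) = n - i by omega, ← add_smul]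
      congr 1
      rw [Nat.choose_succ_succ n i]
      push_cast [Nat.factorial_succ (i+1)]
      field_simp
      ring
    · norm_num
end

section
variable {k : Type*} [Field k] (p : ℕ) [CharP k p]

theorem aux_castp (a b : ℕ) (hab : a + b = p) : (a : k) = -(b : k) := by
  have : ((a + b : ℕ) : k) = 0 := by rw [hab]; exact CharP.cast_eq_zero k p
  push_cast at this
  linear_combination this

theorem aux_keyD (hp : p.Prime) : ∀ (m j : ℕ), j + m ≤ p - 1 →
    (((p - 1 - j).descFactorial m : ℕ) : k) = (-1) ^ m * (((j + m).descFactorial m : ℕ) : k) := by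
  intro m
  induction m with
  | zero => simp
  | succ m ih =>
    intro j hj
    have hp1 : 1 ≤ p := hp.one_lt.le.trans' (by omega)
    rw [Nat.descFactorial_succ,
      show j + (m + 1) = (j + m) + 1 by ring, Nat.succ_descFactorial_succ]
    push_cast
    rw [ih j (by omega), aux_castp p (p - 1 - j - m) (j + m + 1) (by omega)]
    push_cast
    ring

theorem aux_facne (hp : p.Prime) (s : ℕ) (hs : s < p) : ((s.factorial : ℕ) : k) ≠ 0 := by
  rw [Ne, CharP.cast_eq_zero_iff k p, Nat.Prime.dvd_factorial hp]
  omega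

theorem aux_chooseP (hp : p.Prime) (s : ℕ) (hs : s ≤ p - 1) :
    (((p-1).choose s : ℕ) : k) = (-1) ^ s := by
  have h1 := aux_keyD (k := k) p hp s 0 (by omega)
  rw [Nat.descFactorial_eq_factorial_mul_choose] at h1
  simp only [Nat.zero_add, Nat.descFactorial_self] at h1
  have hfac : ((s.factorial : ℕ) : k) ≠ 0 := aux_facne p hp s (by have := hp.two_le; omega)
  push_cast at h1
  rw [mul_comm ((-1:k)^s) _] at h1
  exact mul_left_cancel₀ hfac h1

theorem aux_gval (hp : p.Prime) (hp2 : 2 < p) (i s : ℕ) (his : i < s) (hs : s ≤ p - 1) :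
    auxC k i * 2⁻¹ * (((p-2-i).descFactorial (s-1-i) : ℕ) : k) / 2^(s-1-i)
    = (if i = 0 then 2 else 1) * ((-1:k)^s * ((s.factorial : ℕ) : k) / 2^(s+1)) := by
  have h2k : (2:k) ≠ 0 := by
    have hnd : ¬ p ∣ 2 := fun hd => by have := Nat.le_of_dvd (by norm_num) hd; omega
    have : ((2:ℕ):k) ≠ 0 := fun h => hnd ((CharP.cast_eq_zero_iff k p 2).1 h)
    simpa using this
  have hkey := aux_keyD (k := k) p hp (s-1-i) (i+1) (by omega)
  rw [show p - 1 - (i+1) = p - 2 - i by omega, show i+1+(s-1-i) = s by omega] at hkey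
  have hfac : (i+1).factorial * s.descFactorial (s-1-i) = s.factorial := by
    have h := Nat.factorial_mul_descFactorial (n := s) (k := s-1-i) (by omega)
    rwa [show s - (s-1-i) = i+1 by omega] at h
  have hfk : (((i+1).factorial : ℕ) : k) * ((s.descFactorial (s-1-i) : ℕ) : k)
      = ((s.factorial : ℕ) : k) := by exact_mod_cast congrArg (fun n : ℕ => (n : k)) hfac
  have hC : auxC k i = (if i = 0 then 2 else 1) *
      ((-1:k)^(i+1) * (((i+1).factorial : ℕ) : k) / 2^(i+1)) := by
    unfold auxC
    rcases eq_or_ne i 0 with h | h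
    · subst h; norm_num; field_simp
    · simp [h]
  have hsgn : (-1:k)^(i+1) * (-1:k)^(s-1-i) = (-1)^s := by
    rw [← pow_add]; congr 1; omega
  have hpw : (2:k)^(i+1) * (2:k)^(s-1-i) = 2^s := by
    rw [← pow_add]; congr 1; omega
  have main : ((-1:k)^(i+1) * (((i+1).factorial : ℕ):k) / 2^(i+1)) * 2⁻¹ *
      (((p-2-i).descFactorial (s-1-i) : ℕ) : k) / 2^(s-1-i)
      = (-1:k)^s * ((s.factorial : ℕ) : k) / 2^(s+1) := by
    rw [hkey]
    have e : ((-1:k)^(i+1) * (((i+1).factorial : ℕ):k) / 2^(i+1)) * 2⁻¹ *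
        ((-1:k)^(s-1-i) * ((s.descFactorial (s-1-i) : ℕ):k)) / 2^(s-1-i)
        = ((-1:k)^(i+1) * (-1:k)^(s-1-i)) *
          ((((i+1).factorial : ℕ):k) * ((s.descFactorial (s-1-i) : ℕ):k)) *
          (((2:k)^(i+1))⁻¹ * ((2:k)^(s-1-i))⁻¹ * 2⁻¹) := by ring
    rw [e, hsgn, hfk]
    have e2 : ((2:k)^(i+1))⁻¹ * ((2:k)^(s-1-i))⁻¹ * 2⁻¹ = ((2:k)^(s+1))⁻¹ := by
      rw [← mul_inv, ← mul_inv, hpw, ← pow_succ]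
    rw [e2]
    ring
  rw [hC]
  linear_combination (if i = 0 then (2:k) else 1) * main

theorem aux_hsum (hp : p.Prime) (hp2 : 2 < p) (s : ℕ) (hs1 : 1 ≤ s) (hs : s ≤ p - 1) :
    ∑ i ∈ range s, (auxC k i * 2⁻¹ * (((p-2-i).descFactorial (s-1-i) : ℕ) : k) / 2^(s-1-i))
    = (((s - 1 : ℕ) : k) + 2) * ((-1:k)^s * ((s.factorial : ℕ) : k) / 2^(s+1)) := by
  obtain ⟨t, rfl⟩ : ∃ t, s = t + 1 := ⟨s - 1, by omega⟩
  rw [Finset.sum_range_succ']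
  have h0 : auxC k 0 * 2⁻¹ * (((p-2-0).descFactorial (t+1-1-0) : ℕ) : k) / 2^(t+1-1-0)
      = 2 * ((-1:k)^(t+1) * (((t+1).factorial : ℕ) : k) / 2^(t+1+1)) := by
    have := aux_gval (k := k) p hp hp2 0 (t+1) (by omega) hs
    simpa using this
  have h1 : ∀ i ∈ range t,
      auxC k (i+1) * 2⁻¹ * (((p-2-(i+1)).descFactorial (t+1-1-(i+1)) : ℕ) : k) / 2^(t+1-1-(i+1))
      = ((-1:k)^(t+1) * (((t+1).factorial : ℕ) : k) / 2^(t+1+1)) := by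
    intro i hi
    rw [mem_range] at hi
    have := aux_gval (k := k) p hp hp2 (i+1) (t+1) (by omega) hs
    simpa using this
  rw [Finset.sum_congr rfl h1, h0, Finset.sum_const, card_range, nsmul_eq_mul]
  simp only [Nat.add_sub_cancel]
  ring

theorem aux_coeff (hp : p.Prime) (hp2 : 2 < p) (s : ℕ) (hs : s < p) :
    (if s = p - 1 then 0 else auxC k s)
      - ∑ i ∈ range s, (auxC k i * 2⁻¹ * (((p-2-i).descFactorial (s-1-i) : ℕ) : k) / 2^(s-1-i))
    = -((((p-1).choose s : ℕ) : k) * (((s+1).factorial : ℕ) : k) / 2^s) := by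
  have h2k : (2:k) ≠ 0 := by
    have hnd : ¬ p ∣ 2 := fun hd => by have := Nat.le_of_dvd (by norm_num) hd; omega
    have : ((2:ℕ):k) ≠ 0 := fun h => hnd ((CharP.cast_eq_zero_iff k p 2).1 h)
    simpa using this
  rcases Nat.eq_zero_or_pos s with rfl | hs1
  · rw [if_neg (by omega), Nat.choose_zero_right]
    simp [auxC]
  rcases eq_or_ne s (p-1) with rfl | hne
  · rw [if_pos rfl, aux_hsum p hp hp2 (p-1) hs1 le_rfl]
    have hc1 : ((p - 1 - 1 : ℕ) : k) = -2 := by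
      have := aux_castp (k := k) p (p-1-1) 2 (by omega)
      simpa using this
    have hc2 : ((((p-1)+1).factorial : ℕ) : k) = 0 := by
      rw [show p - 1 + 1 = p by omega, CharP.cast_eq_zero_iff k p]
      exact Nat.dvd_factorial hp.pos le_rfl
    rw [hc1, hc2, Nat.choose_self]
    norm_num
  · rw [if_neg hne, aux_hsum p hp hp2 s hs1 (by omega), aux_chooseP p hp s (by omega)]
    have hC : auxC k s = ((-1:k)^(s+1) * (((s+1).factorial : ℕ):k)) / 2^(s+1) := by
      unfold auxC; rw [if_neg (by omega)]
    rw [hC]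
    have hcast : ((s - 1 : ℕ) : k) = (s : k) - 1 := by
      push_cast [hs1]; ring
    rw [hcast]
    have hfs : (((s+1).factorial : ℕ) : k) = ((s:k) + 1) * ((s.factorial : ℕ) : k) := by
      rw [Nat.factorial_succ]; push_cast; ring
    rw [hfs]
    have hps : (2:k)^(s+1) = 2^s * 2 := by rw [pow_succ]
    rw [hps]
    have h2s : (2:k)^s ≠ 0 := pow_ne_zero _ h2k
    field_simp
    ring
end

/-- Lemma on α, part (d): `α·(y − (1/2)x) = −(x+y)^{p−1}`. -/
theorem stmt9 (k : Type*) [Field k] (p : ℕ) (hp : p.Prime) (hp2 : 2 < p) [CharP k p]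
    (S : Type*) [Ring S] [Algebra k S] (x y : S)
    (hrel : y * x = x * y + (2 : k)⁻¹ • x ^ 2) :
    (-(y ^ (p - 2)) +
        ∑ i ∈ Finset.Icc 1 (p - 2),
          (((-1 : k) ^ (i + 1) * ((i + 1).factorial : k)) / 2 ^ (i + 1)) •
            (x ^ i * y ^ (p - 2 - i))) * (y - (2 : k)⁻¹ • x) =
      -((x + y) ^ (p - 1)) := by
  have h2k : (2:k) ≠ 0 := by
    have hnd : ¬ p ∣ 2 := fun hd => by have := Nat.le_of_dvd (by norm_num) hd; omega
    have : ((2:ℕ):k) ≠ 0 := fun h => hnd ((CharP.cast_eq_zero_iff k p 2).1 h)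
    simpa using this
  have hp3 : 3 ≤ p := by have := hp.two_le; omega
  have hA : (-(y ^ (p - 2)) +
        ∑ i ∈ Finset.Icc 1 (p - 2),
          (((-1 : k) ^ (i + 1) * ((i + 1).factorial : k)) / 2 ^ (i + 1)) •
            (x ^ i * y ^ (p - 2 - i)))
      = ∑ i ∈ range (p-1), auxC k i • (x ^ i * y ^ (p - 2 - i)) := by
    rw [Finset.range_eq_Ico, Finset.sum_eq_sum_Ico_succ_bot (by omega : 0 < p - 1)]
    rw [show Finset.Ico 1 (p-1) = Finset.Icc 1 (p-2) by
      rw [show p - 1 = (p-2)+1 by omega, Finset.Ico_add_one_right_eq_Icc]]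
    congr 1
    · simp [auxC]
    · apply Finset.sum_congr rfl
      intro i hi
      rw [mem_Icc] at hi
      unfold auxC
      rw [if_neg (by omega)]
  rw [hA, mul_sub, Finset.sum_mul, Finset.sum_mul]
  have hS1 : ∀ i ∈ range (p-1), (auxC k i • (x^i * y^(p-2-i))) * y
      = auxC k i • (x^i * y^(p-1-i)) := by
    intro i hi
    rw [mem_range] at hi
    rw [smul_mul_assoc, mul_assoc, ← pow_succ, show p-2-i+1 = p-1-i by omega]
  have hS2 : ∀ i ∈ range (p-1), (auxC k i • (x^i * y^(p-2-i))) * ((2:k)⁻¹ • x)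
      = ∑ s ∈ Finset.Ico (i+1) p,
          (auxC k i * 2⁻¹ * (((p-2-i).descFactorial (s-1-i) : ℕ) : k) / 2^(s-1-i)) •
            (x^s * y^(p-1-s)) := by
    intro i hi
    rw [mem_range] at hi
    rw [smul_mul_assoc, mul_smul_comm, smul_smul, mul_assoc,
      aux_L1 x y h2k hrel (p-2-i), show p - 2 - i + 1 = p - 1 - i by omega,
      Finset.mul_sum, Finset.smul_sum, Finset.sum_Ico_eq_sum_range,
      show p - (i+1) = p - 1 - i by omega]
    apply Finset.sum_congr rfl
    intro m hm
    rw [mem_range] at hm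
    rw [mul_smul_comm, smul_smul, ← mul_assoc (x^i), ← pow_add,
      show i + 1 + m - 1 - i = m by omega, show i + (m+1) = i + 1 + m by omega,
      show p - 2 - i - m = p - 1 - (i+1+m) by omega]
    congr 1
    ring
  rw [Finset.sum_congr rfl hS1, Finset.sum_congr rfl hS2]
  rw [Finset.sum_comm' (f := fun i s =>
      (auxC k i * 2⁻¹ * (((p-2-i).descFactorial (s-1-i) : ℕ) : k) / 2^(s-1-i)) •
        (x^s * y^(p-1-s)))
    (show ∀ i s, i ∈ range (p-1) ∧ s ∈ Finset.Ico (i+1) p ↔ i ∈ range s ∧ s ∈ range p by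
      intro i s; simp only [mem_range, mem_Ico]; omega)]
  have hPull : ∀ s ∈ range p,
      (∑ i ∈ range s, (auxC k i * 2⁻¹ * (((p-2-i).descFactorial (s-1-i) : ℕ) : k) / 2^(s-1-i)) •
        (x^s * y^(p-1-s)))
      = (∑ i ∈ range s, auxC k i * 2⁻¹ * (((p-2-i).descFactorial (s-1-i) : ℕ) : k) / 2^(s-1-i)) •
        (x^s * y^(p-1-s)) := by
    intro s _
    rw [Finset.sum_smul]
  rw [Finset.sum_congr rfl hPull]
  have hExt : ∑ i ∈ range (p-1), auxC k i • (x^i * y^(p-1-i))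
      = ∑ s ∈ range p, (if s = p-1 then (0:k) else auxC k s) • (x^s * y^(p-1-s)) := by
    have hr : range p = range ((p-1)+1) := by congr 1; omega
    rw [hr, Finset.sum_range_succ, if_pos rfl, zero_smul, add_zero]
    apply Finset.sum_congr rfl
    intro s hs
    rw [mem_range] at hs
    rw [if_neg (by omega)]
  rw [hExt, aux_L2 x y h2k hrel (p-1), show p - 1 + 1 = p by omega, ← Finset.sum_neg_distrib,
    ← Finset.sum_sub_distrib]
  apply Finset.sum_congr rfl
  intro s hs
  rw [mem_range] at hs
  rw [← sub_smul, ← neg_smul]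
  exact congrArg (· • (x^s * y^(p-1-s))) (aux_coeff p hp hp2 s hs)
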